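/- Fix a nonzero w ∈ ℂ^N, an N×N Hermitian matrix R̂, a Hermitian positive definite matrix C, and k > 0. The function f(R) = w^H R w - k · (w^H w) · Tr((R - R̂)^H C^{-1} (R - R̂)) over N×N complex matrices R attains its global maximum at R* = R̂ + C w w^H / (2k w^H w), and the maximum value equals w^H R̂ w + (1/(4k)) w^H C w. -/

import Mathlib

open Matrix
open scoped ComplexOrder

noncomputable def qf {N : ℕ} (R : Matrix (Fin N) (Fin N) ℂ) (w : Fin N → ℂ) : ℝ :=
  (star w ⬝ᵥ R.mulVec w).re

variable {N : ℕ}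

lemma mul_vecMulVec' (M : Matrix (Fin N) (Fin N) ℂ) (u v : Fin N → ℂ) :
    M * vecMulVec u v = vecMulVec (M *ᵥ u) v := by
  ext i j
  simp [mul_apply, vecMulVec_apply, mulVec, dotProduct, Finset.sum_mul, mul_assoc]

lemma trace_vecMulVec' (u v : Fin N → ℂ) : (vecMulVec u v).trace = v ⬝ᵥ u := by
  simp [trace, diag, vecMulVec_apply, dotProduct, mul_comm]

lemma conjT_vecMulVec (u v : Fin N → ℂ) :
    (vecMulVec u v)ᴴ = vecMulVec (star v) (star u) := by
  ext i j; simp [conjTranspose_apply, vecMulVec_apply, mul_comm]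

lemma trace_re_nonneg {P : Matrix (Fin N) (Fin N) ℂ} (hP : P.PosSemidef) :
    0 ≤ P.trace.re := by
  have : P.trace.re = ∑ i, (P i i).re := by simp [trace, diag]
  rw [this]
  apply Finset.sum_nonneg
  intro i _
  have := hP.re_dotProduct_nonneg (Pi.single i 1)
  simpa [dotProduct, mulVec, Pi.single_apply, Finset.sum_ite_eq, mul_comm] using this

lemma vmv_mul_vmv (u v x y : Fin N → ℂ) :
    vecMulVec u v * vecMulVec x y = (v ⬝ᵥ x) • vecMulVec u y := by
  ext i j
  simp only [mul_apply, vecMulVec_apply, Matrix.smul_apply, smul_eq_mul, dotProduct, Finset.sum_mul]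
  exact Finset.sum_congr rfl (fun k _ => by ring)

theorem stmt7 {N : ℕ} (w : Fin N → ℂ) (hw : w ≠ 0) (Rh C : Matrix (Fin N) (Fin N) ℂ)
    (hRh : Rh.IsHermitian) (hC : C.PosDef) (k : ℝ) (hk : 0 < k)
    (f : Matrix (Fin N) (Fin N) ℂ → ℝ)
    (hf : f = fun R => qf R w
      - k * qf (1 : Matrix (Fin N) (Fin N) ℂ) w * ((R - Rh)ᴴ * C⁻¹ * (R - Rh)).trace.re)
    (Rstar : Matrix (Fin N) (Fin N) ℂ)
    (hRstar : Rstar = Rh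
      + (1 / (2 * k * qf (1 : Matrix (Fin N) (Fin N) ℂ) w)) • (C * vecMulVec w (star w))) :
    (∀ R : Matrix (Fin N) (Fin N) ℂ, f R ≤ f Rstar) ∧
    f Rstar = qf Rh w + (1 / (4 * k)) * qf C w := by
  set a : ℝ := qf (1 : Matrix (Fin N) (Fin N) ℂ) w with ha
  -- a > 0
  have ha_pos : 0 < a := by
    obtain ⟨i, hi⟩ := Function.ne_iff.mp hw
    have : a = ∑ j, Complex.normSq (w j) := by
      simp [ha, qf, dotProduct, Complex.normSq_apply, Complex.re_sum]
    rw [this]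
    exact Finset.sum_pos' (fun j _ => Complex.normSq_nonneg _)
      ⟨i, Finset.mem_univ i, Complex.normSq_pos.mpr hi⟩
  set c : ℝ := 1 / (2 * k * a) with hc
  set W : Matrix (Fin N) (Fin N) ℂ := vecMulVec w (star w) with hW
  set A : Matrix (Fin N) (Fin N) ℂ := C⁻¹ with hA
  have hdet : IsUnit C.det := hC.det_pos.ne'.isUnit
  have hAC : ∀ X : Matrix (Fin N) (Fin N) ℂ, A * (C * X) = X := by
    intro X; rw [← Matrix.mul_assoc, Matrix.nonsing_inv_mul C hdet, Matrix.one_mul]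
  have hCA : ∀ X : Matrix (Fin N) (Fin N) ℂ, C * (A * X) = X := by
    intro X; rw [← Matrix.mul_assoc, Matrix.mul_nonsing_inv C hdet, Matrix.one_mul]
  have hWH : Wᴴ = W := by
    rw [hW, conjT_vecMulVec, star_star]
  -- key identity
  have key : ∀ R : Matrix (Fin N) (Fin N) ℂ,
      f R = qf Rh w + (1 / (4 * k)) * qf C w
        - (k * a) * ((R - Rstar)ᴴ * A * (R - Rstar)).trace.re := by
    intro R
    set Δ : Matrix (Fin N) (Fin N) ℂ := R - Rh with hΔ
    have hM : R - Rstar = Δ - c • (C * W) := by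
      rw [hRstar, hΔ]; abel
    have hMH : (R - Rstar)ᴴ = Δᴴ - c • (W * C) := by
      rw [hM, conjTranspose_sub, conjTranspose_smul, conjTranspose_mul, hWH, hC.1.eq,
        star_trivial]
    -- expand
    have expand : (R - Rstar)ᴴ * A * (R - Rstar)
        = Δᴴ * A * Δ - c • (Δᴴ * W) - c • (W * Δ) + (c * c) • (W * (C * W)) := by
      rw [hMH, hM]
      simp only [Matrix.sub_mul, Matrix.mul_sub, Matrix.smul_mul, Matrix.mul_smul,
        smul_sub, smul_smul, Matrix.mul_assoc, hAC, hCA]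
      abel
    -- trace values
    have tr1 : ∀ X : Matrix (Fin N) (Fin N) ℂ, (X * W).trace = star w ⬝ᵥ X *ᵥ w := by
      intro X; rw [hW, mul_vecMulVec', trace_vecMulVec']
    have trWC : (W * (C * W)).trace = (star w ⬝ᵥ C *ᵥ w) * (star w ⬝ᵥ w) := by
      rw [hW, mul_vecMulVec' C, vmv_mul_vmv, Matrix.trace_smul, trace_vecMulVec',
        smul_eq_mul]
    -- realness facts
    have hstar : star w ⬝ᵥ Δᴴ *ᵥ w = star (star w ⬝ᵥ Δ *ᵥ w) := by
      simp only [dotProduct, mulVec, conjTranspose_apply, star_sum, star_mul', star_star,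
        Pi.star_apply, Finset.mul_sum]
      rw [Finset.sum_comm]
      exact Finset.sum_congr rfl (fun i _ => Finset.sum_congr rfl (fun j _ => by ring))
    have hre1 : (star w ⬝ᵥ Δᴴ *ᵥ w).re = (star w ⬝ᵥ Δ *ᵥ w).re := by
      rw [hstar]; simp
    have hCreal : star w ⬝ᵥ C *ᵥ w = ((qf C w : ℝ) : ℂ) := by
      rcases eq_or_ne w 0 with h0 | h0
      · simp [h0, qf]
      · have := hC.dotProduct_mulVec_pos h0
        rw [Complex.lt_def] at this
        apply Complex.ext
        · simp [qf]
        · simp [← this.2]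
    have haSum : a = ∑ j, Complex.normSq (w j) := by
      simp [ha, qf, dotProduct, Complex.normSq_apply, Complex.re_sum]
    have hwsum : star w ⬝ᵥ w = ((a : ℝ) : ℂ) := by
      rw [haSum]
      push_cast
      simp only [dotProduct, Pi.star_apply]
      exact Finset.sum_congr rfl (fun j _ => by
        rw [Complex.normSq_eq_conj_mul_self]; rfl)
    -- trace identity
    have htr : ((R - Rstar)ᴴ * A * (R - Rstar)).trace.re
        = (Δᴴ * A * Δ).trace.re - 2 * c * (star w ⬝ᵥ Δ *ᵥ w).re
          + c * c * (qf C w * a) := by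
      rw [expand, trace_add, trace_sub, trace_sub, trace_smul, trace_smul, trace_smul,
        tr1, trace_mul_comm W Δ, tr1, trWC, hCreal, hwsum]
      push_cast
      simp only [Complex.add_re, Complex.sub_re, Complex.real_smul, Complex.mul_re,
        Complex.ofReal_re, Complex.ofReal_im, hre1]
      ring
    have hq : qf R w = qf Rh w + (star w ⬝ᵥ Δ *ᵥ w).re := by
      rw [hΔ]
      simp only [qf, sub_mulVec, dotProduct_sub, Complex.sub_re]
      ring
    -- put it all together
    have hfR : f R = qf R w - k * a * ((R - Rh)ᴴ * A * (R - Rh)).trace.re := by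
      rw [hf]
    rw [hfR, hq, ← hΔ]
    have hT : (Δᴴ * A * Δ).trace.re
        = ((R - Rstar)ᴴ * A * (R - Rstar)).trace.re + 2 * c * (star w ⬝ᵥ Δ *ᵥ w).re
          - c * c * (qf C w * a) := by
      rw [htr]; ring
    rw [hT, hc]
    field_simp
    ring
  -- conclusion
  have hzero : ((Rstar - Rstar)ᴴ * A * (Rstar - Rstar)).trace.re = 0 := by
    simp [sub_self]
  constructor
  · intro R
    rw [key R, key Rstar, hzero]
    have hPSD : (((R - Rstar)ᴴ * A * (R - Rstar))).PosSemidef :=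
      (hC.inv.posSemidef).conjTranspose_mul_mul_same (R - Rstar)
    have h0 := trace_re_nonneg hPSD
    nlinarith [mul_pos hk ha_pos]
  · rw [key Rstar, hzero]
    ring
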